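/- arXiv:2504.03566 — 2 statements merged into one kernel-verified Lean document; each statement's English description precedes it below -/
import Mathlib

section
/- Let G be a finite weighted graph and (f, Λ) a 1-Laplacian eigenpair (i.e., there exist ξ ∈ ∂‖f‖_1 and Ξ ∈ ∂‖Kf‖_1 with K^T Ξ = Λ ν ⊙ ξ). If A is a strong nodal domain induced by f, then Λ equals the isoperimetric constant of A: Λ = (Σ_{(u,v): u∈A, v∉A} ω_{uv}) / ν(A), where ν(A) = Σ_{u∈A} ν_u. -/
open Finset

/-- `A` is a strong nodal domain of `f`: a maximal connected subset of the interior
vertices on which `f` has strictly constant sign. -/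
def IsStrongNodalDomain {V : Type*} (G : SimpleGraph V) (int : Set V) (f : V → ℝ)
    (A : Set V) : Prop :=
  A.Nonempty ∧ A ⊆ int ∧ ((∀ u ∈ A, 0 < f u) ∨ (∀ u ∈ A, f u < 0)) ∧
  (G.induce A).Connected ∧
  ∀ B : Set V, A ⊆ B → B ⊆ int → ((∀ u ∈ B, 0 < f u) ∨ (∀ u ∈ B, f u < 0)) →
    (G.induce B).Connected → B = A
/-- The set-valued sign: `{1}` if `x>0`, `[-1,1]` if `x=0`, `{-1}` if `x<0`. -/
def signSet (x : ℝ) : Set ℝ := {s : ℝ | |s| ≤ 1 ∧ s * x = |x|}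

/-- `(f, Λ)` is a generalized eigenpair of the graph `1`-Laplacian (with Dirichlet
boundary `Bd`): there are subgradients `ξ ∈ ∂‖f‖_{ν,1}` and `Ξ ∈ ∂‖Kf‖_1` with
`K^T Ξ = Λ ν ⊙ ξ` on interior vertices. -/
def IsOneEigenpair {V : Type*} [Fintype V] (G : SimpleGraph V) [DecidableRel G.Adj]
    (ω : V → V → ℝ) (ν : V → ℝ) (Bd : Set V) (f : V → ℝ) (Λ : ℝ) : Prop :=
  f ≠ 0 ∧ (∀ u ∈ Bd, f u = 0) ∧
  ∃ ξ : V → ℝ, ∃ Ξ : V → V → ℝ,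
    (∀ u, ξ u ∈ signSet (f u)) ∧
    (∀ u v, G.Adj u v → Ξ u v ∈ signSet (ω u v * (f v - f u))) ∧
    ∀ u, u ∉ Bd →
      (1 / 2) * ∑ v ∈ G.neighborFinset u, ω u v * (Ξ v u - Ξ u v) = Λ * ν u * ξ u

lemma signSet_eq_one {x s : ℝ} (hx : 0 < x) (hs : s ∈ signSet x) : s = 1 := by
  obtain ⟨-, h2⟩ := hs
  rw [abs_of_pos hx] at h2
  exact mul_right_cancel₀ hx.ne' (h2.trans (one_mul x).symm)

lemma signSet_eq_neg_one {x s : ℝ} (hx : x < 0) (hs : s ∈ signSet x) : s = -1 := by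
  obtain ⟨-, h2⟩ := hs
  rw [abs_of_neg hx] at h2
  have : s * x = (-1) * x := by linarith
  exact mul_right_cancel₀ hx.ne this

lemma induce_insert_connected {V : Type*} (G : SimpleGraph V) (A : Set V) (u v : V)
    (hu : u ∈ A) (huv : G.Adj u v) (hc : (G.induce A).Connected) :
    (G.induce (A ∪ {v})).Connected := by
  have hsub : A ⊆ A ∪ {v} := Set.subset_union_left
  have hv : v ∈ A ∪ {v} := Or.inr rfl
  have key : ∀ x : (A ∪ {v} : Set V), (G.induce (A ∪ {v})).Reachable x ⟨u, hsub hu⟩ := by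
    rintro ⟨x, hx | hx⟩
    · have := (hc.preconnected ⟨x, hx⟩ ⟨u, hu⟩).map (G.induceHomOfLE hsub).toHom
      exact this
    · have hx' : x = v := hx
      subst hx'
      have hadj : (G.induce (A ∪ {x})).Adj ⟨x, hv⟩ ⟨u, hsub hu⟩ := huv.symm
      exact hadj.reachable
  have : Nonempty (A ∪ {v} : Set V) := ⟨⟨u, hsub hu⟩⟩
  exact ⟨fun x y => (key x).trans (key y).symm⟩

/-- If `(f, Λ)` is a `1`-Laplacian eigenpair on a finite weighted graph
(no boundary) and `A` is a strong nodal domain of `f`, then `Λ` equals the isoperimetric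
constant of `A`: `Λ = (Σ_{u∈A, v∉A, v∼u} ω_{uv}) / ν(A)`. -/
theorem oneLap_eigenvalue_eq_isoperimetric {V : Type*} [Fintype V] [DecidableEq V]
    (G : SimpleGraph V) [DecidableRel G.Adj]
    (ω : V → V → ℝ) (ν : V → ℝ)
    (hω : ∀ u v, G.Adj u v → 0 < ω u v) (hωs : ∀ u v, ω u v = ω v u)
    (hν : ∀ u, 0 < ν u)
    (f : V → ℝ) (Λ : ℝ) (heig : IsOneEigenpair G ω ν (∅ : Set V) f Λ)
    (A : Finset V) (hA : IsStrongNodalDomain G Set.univ f (A : Set V)) :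
    Λ = (∑ u ∈ A, ∑ v ∈ (G.neighborFinset u).filter (fun v => v ∉ A), ω u v) /
        (∑ u ∈ A, ν u) := by
  classical
  obtain ⟨hne, -, hsign, hconn, hmax⟩ := hA
  obtain ⟨hf0, -, ξ, Ξ, hξ, hΞ, heqn⟩ := heig
  have hAne : A.Nonempty := Finset.coe_nonempty.mp hne
  have hνA : 0 < ∑ u ∈ A, ν u := Finset.sum_pos (fun u _ => hν u) hAne
  set W := ∑ u ∈ A, ∑ v ∈ (G.neighborFinset u).filter (fun v => v ∉ A), ω u v with hW
  have hsum : ∑ u ∈ A, ((1:ℝ)/2) * ∑ v ∈ G.neighborFinset u, ω u v * (Ξ v u - Ξ u v)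
      = ∑ u ∈ A, Λ * ν u * ξ u :=
    Finset.sum_congr rfl (fun u _ => heqn u (Set.notMem_empty u))
  -- cancellation of inner edges
  have hinner : ∑ u ∈ A, ∑ v ∈ (G.neighborFinset u).filter (fun v => v ∈ A),
      ω u v * (Ξ v u - Ξ u v) = 0 := by
    have hrw : ∀ u, (G.neighborFinset u).filter (fun v => v ∈ A)
        = A.filter (fun v => G.Adj u v) := by
      intro u; ext v; simp [and_comm]
    have hstep : ∑ u ∈ A, ∑ v ∈ (G.neighborFinset u).filter (fun v => v ∈ A),
        ω u v * (Ξ v u - Ξ u v)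
        = ∑ u ∈ A, ∑ v ∈ A, (if G.Adj u v then ω u v * (Ξ v u - Ξ u v) else 0) := by
      refine Finset.sum_congr rfl fun u _ => ?_
      rw [hrw u, Finset.sum_filter]
    rw [hstep]
    have hF : ∀ u v : V, (if G.Adj u v then ω u v * (Ξ v u - Ξ u v) else 0)
        = -(if G.Adj v u then ω v u * (Ξ u v - Ξ v u) else 0) := by
      intro u v
      by_cases h : G.Adj u v
      · rw [if_pos h, if_pos h.symm, hωs u v]; ring
      · rw [if_neg h, if_neg (fun h' => h h'.symm)]; ring
    have h2 : ∑ u ∈ A, ∑ v ∈ A, (if G.Adj u v then ω u v * (Ξ v u - Ξ u v) else 0)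
        = -∑ u ∈ A, ∑ v ∈ A, (if G.Adj u v then ω u v * (Ξ v u - Ξ u v) else 0) := by
      calc ∑ u ∈ A, ∑ v ∈ A, (if G.Adj u v then ω u v * (Ξ v u - Ξ u v) else 0)
          = ∑ u ∈ A, ∑ v ∈ A, -(if G.Adj v u then ω v u * (Ξ u v - Ξ v u) else 0) :=
            Finset.sum_congr rfl fun u _ => Finset.sum_congr rfl fun v _ => hF u v
        _ = -∑ u ∈ A, ∑ v ∈ A, (if G.Adj v u then ω v u * (Ξ u v - Ξ v u) else 0) := by
            simp
        _ = -∑ v ∈ A, ∑ u ∈ A, (if G.Adj v u then ω v u * (Ξ u v - Ξ v u) else 0) := by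
            rw [Finset.sum_comm]
    linarith
  have key : Λ * ∑ u ∈ A, ν u = W := by
    rcases hsign with hpos | hneg
    · -- positive nodal domain
      have hbd : ∀ u ∈ A, ∀ v ∈ (G.neighborFinset u).filter (fun v => v ∉ A),
          ω u v * (Ξ v u - Ξ u v) = 2 * ω u v := by
        intro u hu v hv
        rw [Finset.mem_filter, SimpleGraph.mem_neighborFinset] at hv
        obtain ⟨hadj, hvA⟩ := hv
        have hfu : 0 < f u := hpos u (Finset.mem_coe.mpr hu)
        have hfv : f v ≤ 0 := by
          by_contra h
          push_neg at h
          have hconn' := induce_insert_connected G (↑A) u v (Finset.mem_coe.mpr hu)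
            hadj hconn
          have hB : (↑A : Set V) ∪ {v} = (↑A : Set V) := by
            refine hmax _ Set.subset_union_left (Set.subset_univ _) (Or.inl ?_) hconn'
            rintro w (hw | hw)
            · exact hpos w hw
            · have : w = v := hw
              subst this; exact h
          have : v ∈ (↑A : Set V) := hB ▸ (Or.inr rfl : v ∈ (↑A : Set V) ∪ {v})
          exact hvA (Finset.mem_coe.mp this)
        have hneg1 : ω u v * (f v - f u) < 0 :=
          mul_neg_of_pos_of_neg (hω u v hadj) (by linarith)
        have hΞuv : Ξ u v = -1 := signSet_eq_neg_one hneg1 (hΞ u v hadj)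
        have hpos1 : 0 < ω v u * (f u - f v) :=
          mul_pos (hω v u hadj.symm) (by linarith)
        have hΞvu : Ξ v u = 1 := signSet_eq_one hpos1 (hΞ v u hadj.symm)
        rw [hΞuv, hΞvu]; ring
      have hR : ∑ u ∈ A, Λ * ν u * ξ u = Λ * ∑ u ∈ A, ν u := by
        rw [Finset.mul_sum]
        refine Finset.sum_congr rfl fun u hu => ?_
        rw [signSet_eq_one (hpos u (Finset.mem_coe.mpr hu)) (hξ u)]; ring
      have hL : ∑ u ∈ A, ((1:ℝ)/2) * ∑ v ∈ G.neighborFinset u, ω u v * (Ξ v u - Ξ u v)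
          = W := by
        rw [← Finset.mul_sum]
        have hsplit : ∑ u ∈ A, ∑ v ∈ G.neighborFinset u, ω u v * (Ξ v u - Ξ u v)
            = (∑ u ∈ A, ∑ v ∈ (G.neighborFinset u).filter (fun v => v ∈ A),
                ω u v * (Ξ v u - Ξ u v))
              + ∑ u ∈ A, ∑ v ∈ (G.neighborFinset u).filter (fun v => v ∉ A),
                ω u v * (Ξ v u - Ξ u v) := by
          rw [← Finset.sum_add_distrib]
          exact Finset.sum_congr rfl fun u _ =>
            (Finset.sum_filter_add_sum_filter_not _ _ _).symm
        rw [hsplit, hinner, zero_add]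
        have : ∑ u ∈ A, ∑ v ∈ (G.neighborFinset u).filter (fun v => v ∉ A),
            ω u v * (Ξ v u - Ξ u v) = 2 * W := by
          rw [hW, Finset.mul_sum]
          refine Finset.sum_congr rfl fun u hu => ?_
          rw [Finset.mul_sum]
          exact Finset.sum_congr rfl fun v hv => hbd u hu v hv
        rw [this]; ring
      rw [← hR, ← hsum, hL]
    · -- negative nodal domain
      have hbd : ∀ u ∈ A, ∀ v ∈ (G.neighborFinset u).filter (fun v => v ∉ A),
          ω u v * (Ξ v u - Ξ u v) = -(2 * ω u v) := by
        intro u hu v hv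
        rw [Finset.mem_filter, SimpleGraph.mem_neighborFinset] at hv
        obtain ⟨hadj, hvA⟩ := hv
        have hfu : f u < 0 := hneg u (Finset.mem_coe.mpr hu)
        have hfv : 0 ≤ f v := by
          by_contra h
          push_neg at h
          have hconn' := induce_insert_connected G (↑A) u v (Finset.mem_coe.mpr hu)
            hadj hconn
          have hB : (↑A : Set V) ∪ {v} = (↑A : Set V) := by
            refine hmax _ Set.subset_union_left (Set.subset_univ _) (Or.inr ?_) hconn'
            rintro w (hw | hw)
            · exact hneg w hw
            · have : w = v := hw
              subst this; exact h
          have : v ∈ (↑A : Set V) := hB ▸ (Or.inr rfl : v ∈ (↑A : Set V) ∪ {v})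
          exact hvA (Finset.mem_coe.mp this)
        have hpos1 : 0 < ω u v * (f v - f u) :=
          mul_pos (hω u v hadj) (by linarith)
        have hΞuv : Ξ u v = 1 := signSet_eq_one hpos1 (hΞ u v hadj)
        have hneg1 : ω v u * (f u - f v) < 0 :=
          mul_neg_of_pos_of_neg (hω v u hadj.symm) (by linarith)
        have hΞvu : Ξ v u = -1 := signSet_eq_neg_one hneg1 (hΞ v u hadj.symm)
        rw [hΞuv, hΞvu]; ring
      have hR : ∑ u ∈ A, Λ * ν u * ξ u = -(Λ * ∑ u ∈ A, ν u) := by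
        rw [Finset.mul_sum, ← Finset.sum_neg_distrib]
        refine Finset.sum_congr rfl fun u hu => ?_
        rw [signSet_eq_neg_one (hneg u (Finset.mem_coe.mpr hu)) (hξ u)]; ring
      have hL : ∑ u ∈ A, ((1:ℝ)/2) * ∑ v ∈ G.neighborFinset u, ω u v * (Ξ v u - Ξ u v)
          = -W := by
        rw [← Finset.mul_sum]
        have hsplit : ∑ u ∈ A, ∑ v ∈ G.neighborFinset u, ω u v * (Ξ v u - Ξ u v)
            = (∑ u ∈ A, ∑ v ∈ (G.neighborFinset u).filter (fun v => v ∈ A),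
                ω u v * (Ξ v u - Ξ u v))
              + ∑ u ∈ A, ∑ v ∈ (G.neighborFinset u).filter (fun v => v ∉ A),
                ω u v * (Ξ v u - Ξ u v) := by
          rw [← Finset.sum_add_distrib]
          exact Finset.sum_congr rfl fun u _ =>
            (Finset.sum_filter_add_sum_filter_not _ _ _).symm
        rw [hsplit, hinner, zero_add]
        have : ∑ u ∈ A, ∑ v ∈ (G.neighborFinset u).filter (fun v => v ∉ A),
            ω u v * (Ξ v u - Ξ u v) = -(2 * W) := by
          rw [hW, Finset.mul_sum, ← Finset.sum_neg_distrib]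
          refine Finset.sum_congr rfl fun u hu => ?_
          rw [Finset.mul_sum, ← Finset.sum_neg_distrib]
          exact Finset.sum_congr rfl fun v hv => hbd u hu v hv
        rw [this]; ring
      have := hL.symm.trans (hsum.trans hR)
      linarith
  rw [eq_div_iff hνA.ne']
  linarith [key]
end

section
/- Let G be a finite weighted graph. If A is a strong nodal domain of a 1-Laplacian eigenfunction f with eigenvalue Λ, then the characteristic function χ_A of A is itself a 1-Laplacian eigenfunction with the same eigenvalue Λ. -/
open Finset

/-- Inserting a vertex adjacent to a connected induced subgraph keeps it connected. -/
lemma connected_insert_aux {V : Type*} (G : SimpleGraph V) (A : Set V)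
    (hc : (G.induce A).Connected) {u v : V} (hu : u ∈ A) (huv : G.Adj u v) :
    (G.induce (insert v A)).Connected := by
  have hsub : A ⊆ insert v A := Set.subset_insert v A
  rw [SimpleGraph.connected_iff]
  have key : ∀ x : (insert v A : Set V),
      (G.induce (insert v A)).Reachable x ⟨u, hsub hu⟩ := by
    rintro ⟨x, hx⟩
    rcases hx with rfl | hx
    · exact SimpleGraph.Adj.reachable (by simpa using huv.symm)
    · have h := hc.preconnected ⟨x, hx⟩ ⟨u, hu⟩
      exact h.map (G.induceHomOfLE hsub).toHom
  exact ⟨fun x y => (key x).trans (key y).symm, ⟨⟨v, Set.mem_insert v A⟩⟩⟩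

/-- Main argument in the positive-sign normalisation. -/
lemma aux_pos {V : Type*} [Fintype V] [DecidableEq V] (G : SimpleGraph V)
    [DecidableRel G.Adj] (ω : V → V → ℝ) (ν : V → ℝ)
    (hω : ∀ u v, G.Adj u v → 0 < ω u v)
    (f : V → ℝ) (Λ : ℝ) (A : Finset V) (hne : A.Nonempty)
    (hpos : ∀ u ∈ A, 0 < f u)
    (hadj : ∀ u ∈ A, ∀ v, v ∉ A → G.Adj u v → f v ≤ 0)
    (ξ : V → ℝ) (Ξ : V → V → ℝ)
    (hξ : ∀ u, ξ u ∈ signSet (f u))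
    (hΞ : ∀ u v, G.Adj u v → Ξ u v ∈ signSet (ω u v * (f v - f u)))
    (heq : ∀ u, (1 / 2) * ∑ v ∈ G.neighborFinset u, ω u v * (Ξ v u - Ξ u v) = Λ * ν u * ξ u) :
    IsOneEigenpair G ω ν (∅ : Set V) (fun u => if u ∈ A then (1 : ℝ) else 0) Λ := by
  obtain ⟨a, ha⟩ := hne
  refine ⟨?_, by simp, ξ, Ξ, ?_, ?_, fun u _ => heq u⟩
  · intro h
    have := congrFun h a
    simp [ha] at this
  · intro u
    by_cases hu : u ∈ A
    · have hfu := hpos u hu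
      obtain ⟨h1, h2⟩ := hξ u
      have hξ1 : ξ u = 1 := by
        have : ξ u * f u = 1 * f u := by rw [h2, abs_of_pos hfu, one_mul]
        exact mul_right_cancel₀ (ne_of_gt hfu) this
      simp [signSet, hu, hξ1]
    · obtain ⟨h1, _⟩ := hξ u
      simp [signSet, hu, h1]
  · intro u v huv
    obtain ⟨h1, h2⟩ := hΞ u v huv
    have hωp := hω u v huv
    by_cases hu : u ∈ A <;> by_cases hv : v ∈ A
    · simp [signSet, hu, hv, h1]
    · -- u ∈ A, v ∉ A : Ξ u v = -1
      have hfv : f v ≤ 0 := hadj u hu v hv huv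
      have hx : ω u v * (f v - f u) < 0 :=
        mul_neg_of_pos_of_neg hωp (by linarith [hpos u hu])
      have hΞ1 : Ξ u v = -1 := by
        have : Ξ u v * (ω u v * (f v - f u)) = (-1) * (ω u v * (f v - f u)) := by
          rw [h2, abs_of_neg hx]; ring
        exact mul_right_cancel₀ (ne_of_lt hx) this
      constructor
      · simp [hΞ1]
      · rw [hΞ1]
        simp only [hu, hv, if_true, if_false]
        rw [abs_of_neg (show ω u v * ((0:ℝ) - 1) < 0 by nlinarith)]
        ring
    · -- u ∉ A, v ∈ A : Ξ u v = 1
      have hfu : f u ≤ 0 := hadj v hv u hu huv.symm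
      have hx : 0 < ω u v * (f v - f u) :=
        mul_pos hωp (by linarith [hpos v hv])
      have hΞ1 : Ξ u v = 1 := by
        have : Ξ u v * (ω u v * (f v - f u)) = 1 * (ω u v * (f v - f u)) := by
          rw [h2, abs_of_pos hx, one_mul]
        exact mul_right_cancel₀ (ne_of_gt hx) this
      constructor
      · simp [hΞ1]
      · rw [hΞ1]
        simp only [hu, hv, if_true, if_false]
        rw [abs_of_pos (show (0:ℝ) < ω u v * (1 - 0) by nlinarith)]
        ring
    · simp [signSet, hu, hv, h1]

/-- If `A` is a strong nodal domain of a `1`-Laplacian eigenfunction `f`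
with eigenvalue `Λ`, then the characteristic function `χ_A` is itself a `1`-Laplacian
eigenfunction with the same eigenvalue `Λ`. -/
theorem oneLap_indicator_of_nodal_domain_is_eigenfunction {V : Type*} [Fintype V]
    [DecidableEq V] (G : SimpleGraph V) [DecidableRel G.Adj]
    (ω : V → V → ℝ) (ν : V → ℝ)
    (hω : ∀ u v, G.Adj u v → 0 < ω u v) (hωs : ∀ u v, ω u v = ω v u)
    (hν : ∀ u, 0 < ν u)
    (f : V → ℝ) (Λ : ℝ) (heig : IsOneEigenpair G ω ν (∅ : Set V) f Λ)
    (A : Finset V) (hA : IsStrongNodalDomain G Set.univ f (A : Set V)) :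
    IsOneEigenpair G ω ν (∅ : Set V) (fun u => if u ∈ A then (1 : ℝ) else 0) Λ := by
  obtain ⟨hne, -, hsgn, hconn, hmax⟩ := hA
  obtain ⟨-, -, ξ, Ξ, hξ, hΞ, heq⟩ := heig
  have hne' : A.Nonempty := by
    obtain ⟨a, ha⟩ := hne
    exact ⟨a, by simpa using ha⟩
  have heq' : ∀ u, (1 / 2) * ∑ v ∈ G.neighborFinset u, ω u v * (Ξ v u - Ξ u v)
      = Λ * ν u * ξ u := fun u => heq u (by simp)
  rcases hsgn with hpos | hneg
  · have hpos' : ∀ u ∈ A, 0 < f u := fun u hu => hpos u (by simpa using hu)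
    refine aux_pos G ω ν hω f Λ A hne' hpos' ?_ ξ Ξ hξ hΞ heq'
    intro u hu v hv huv
    by_contra hfv
    push_neg at hfv
    have hB := hmax (insert v (A : Set V)) (Set.subset_insert v _) (by simp)
      (Or.inl ?_) (connected_insert_aux G _ hconn (by simpa using hu) huv)
    · exact hv (by have hm : v ∈ (A : Set V) := hB ▸ Set.mem_insert v (A : Set V); simpa using hm)
    · rintro w (rfl | hw)
      · exact hfv
      · exact hpos w hw
  · have hpos' : ∀ u ∈ A, 0 < (-f) u := fun u hu => by
      simpa using hneg u (by simpa using hu)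
    have hadj : ∀ u ∈ A, ∀ v, v ∉ A → G.Adj u v → (-f) v ≤ 0 := by
      intro u hu v hv huv
      by_contra hfv
      push_neg at hfv
      simp only [Pi.neg_apply, neg_pos] at hfv
      have hB := hmax (insert v (A : Set V)) (Set.subset_insert v _) (by simp)
        (Or.inr ?_) (connected_insert_aux G _ hconn (by simpa using hu) huv)
      · exact hv (by have hm : v ∈ (A : Set V) := hB ▸ Set.mem_insert v (A : Set V); simpa using hm)
      · rintro w (rfl | hw)
        · exact hfv
        · exact hneg w hw
    refine aux_pos G ω ν hω (-f) Λ A hne' hpos' hadj (-ξ) (fun u v => -Ξ u v) ?_ ?_ ?_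
    · intro u
      obtain ⟨h1, h2⟩ := hξ u
      exact ⟨by simpa using h1, by simp only [Pi.neg_apply]; rw [abs_neg, ← h2]; ring⟩
    · intro u v huv
      obtain ⟨h1, h2⟩ := hΞ u v huv
      refine ⟨by simpa using h1, ?_⟩
      have : ω u v * ((-f) v - (-f) u) = -(ω u v * (f v - f u)) := by
        simp only [Pi.neg_apply]; ring
      rw [this, abs_neg, ← h2]; ring
    · intro u
      have hsum : ∑ v ∈ G.neighborFinset u, ω u v * (-Ξ v u - -Ξ u v)
          = -∑ v ∈ G.neighborFinset u, ω u v * (Ξ v u - Ξ u v) := by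
        rw [← Finset.sum_neg_distrib]
        exact Finset.sum_congr rfl fun v _ => by ring
      rw [hsum]
      have := heq' u
      simp only [Pi.neg_apply]
      linarith
end
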